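/- Every infinite non-cyclic group has infinitely many non-power subgroups. -/

import Mathlib

/-- `G^m`: the subgroup generated by all `m`-th powers of elements of `G`. -/
def powerSubgroup (G : Type*) [Group G] (m : ℕ) : Subgroup G :=
  Subgroup.closure (Set.range fun g : G => g ^ m)

namespace NP
variable {G : Type*} [Group G]

lemma pow_mem_power (m : ℕ) (g : G) : g ^ m ∈ powerSubgroup G m :=
  Subgroup.subset_closure ⟨g, rfl⟩

lemma power_zero : powerSubgroup G 0 = ⊥ := by
  refine le_bot_iff.mp ((Subgroup.closure_le _).mpr ?_)
  rintro x ⟨g, rfl⟩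
  simp [Subgroup.mem_bot]

lemma power_le {d m : ℕ} (hdm : d ∣ m) : powerSubgroup G m ≤ powerSubgroup G d := by
  refine (Subgroup.closure_le _).mpr ?_
  rintro x ⟨g, rfl⟩
  obtain ⟨k, rfl⟩ := hdm
  show g ^ (d * k) ∈ _
  rw [pow_mul]
  exact Subgroup.pow_mem _ (pow_mem_power d g) k

lemma power_sup (a b : ℕ) :
    powerSubgroup G a ⊔ powerSubgroup G b = powerSubgroup G (Nat.gcd a b) := by
  refine le_antisymm (sup_le (power_le (Nat.gcd_dvd_left a b)) (power_le (Nat.gcd_dvd_right a b))) ?_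
  refine (Subgroup.closure_le _).mpr ?_
  rintro x ⟨g, rfl⟩
  have key : (g : G) ^ (Nat.gcd a b : ℤ) = (g ^ a) ^ (Nat.gcdA a b) * (g ^ b) ^ (Nat.gcdB a b) := by
    rw [← zpow_natCast g a, ← zpow_natCast g b, ← zpow_mul, ← zpow_mul, ← zpow_add,
      ← Nat.gcd_eq_gcd_ab]
  have : g ^ Nat.gcd a b = (g ^ a) ^ (Nat.gcdA a b) * (g ^ b) ^ (Nat.gcdB a b) := by
    rw [← key, zpow_natCast]
  show g ^ Nat.gcd a b ∈ _
  rw [this]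
  exact mul_mem
    (Subgroup.zpow_mem _ (le_sup_left (a := powerSubgroup G a) (pow_mem_power a g)) _)
    (Subgroup.zpow_mem _ (le_sup_right (b := powerSubgroup G b) (pow_mem_power b g)) _)

lemma power_normal (m : ℕ) : (powerSubgroup G m).Normal := by
  constructor
  intro n hn g
  have hmap : (powerSubgroup G m).map (MulAut.conj g).toMonoidHom = powerSubgroup G m := by
    unfold powerSubgroup
    rw [MonoidHom.map_closure]
    congr 1
    ext x
    constructor
    · rintro ⟨-, ⟨y, rfl⟩, rfl⟩
      exact ⟨MulAut.conj g y, (map_pow _ y m).symm⟩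
    · rintro ⟨y, rfl⟩
      refine ⟨((MulAut.conj g).symm y) ^ m, ⟨(MulAut.conj g).symm y, rfl⟩, ?_⟩
      rw [map_pow]
      show ((MulAut.conj g) ((MulAut.conj g).symm y)) ^ m = y ^ m
      rw [MulEquiv.apply_symm_apply]
  have : (MulAut.conj g) n ∈ (powerSubgroup G m).map (MulAut.conj g).toMonoidHom :=
    Subgroup.mem_map.mpr ⟨n, hn, rfl⟩
  rw [hmap] at this
  simpa [MulAut.conj_apply] using this

/-- An element that is not of finite order gives injective family of subgroups. -/
lemma zpowers_pow_injective {g : G} (hg : ¬IsOfFinOrder g) :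
    Function.Injective fun i : ℕ => Subgroup.zpowers (g ^ 2 ^ i) := by
  have hzi : Function.Injective fun n : ℤ => g ^ n :=
    injective_zpow_iff_not_isOfFinOrder.mpr hg
  have key : ∀ i j : ℕ, Subgroup.zpowers (g ^ 2 ^ i) = Subgroup.zpowers (g ^ 2 ^ j) → j ≤ i := by
    intro i j hij
    have : g ^ 2 ^ i ∈ Subgroup.zpowers (g ^ 2 ^ j) := hij ▸ Subgroup.mem_zpowers _
    obtain ⟨k, hk⟩ := Subgroup.mem_zpowers_iff.mp this
    have hk' : g ^ (((2 ^ j : ℕ) : ℤ) * k) = g ^ (((2 ^ i : ℕ) : ℤ)) := by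
      rw [zpow_mul, zpow_natCast, zpow_natCast, hk]
    have h2 : ((2 ^ j : ℕ) : ℤ) * k = ((2 ^ i : ℕ) : ℤ) := hzi hk'
    have hdvd : (2 ^ j : ℕ) ∣ 2 ^ i := by
      have : ((2 ^ j : ℕ) : ℤ) ∣ ((2 ^ i : ℕ) : ℤ) := ⟨k, h2.symm⟩
      exact_mod_cast this
    have hle : (2 : ℕ) ^ j ≤ 2 ^ i := Nat.le_of_dvd (by positivity) hdvd
    exact (Nat.pow_le_pow_iff_right (by norm_num)).mp hle
  intro i j hij
  exact le_antisymm (key j i hij.symm) (key i j hij)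

lemma infinite_subgroups (H : Type*) [Group H] [Infinite H] : Infinite (Subgroup H) := by
  by_cases hex : ∃ x : H, ¬IsOfFinOrder x
  · obtain ⟨g, hg⟩ := hex
    exact Infinite.of_injective _ (zpowers_pow_injective hg)
  · push_neg at hex
    by_contra hfin
    rw [not_infinite_iff_finite] at hfin
    have h1 : (Set.range fun x : H => Subgroup.zpowers x).Finite :=
      Set.Finite.subset Set.finite_univ (Set.subset_univ _)
    have h2 : (Set.univ : Set H).Finite := by
      have : (Set.univ : Set H) ⊆ ⋃ S ∈ Set.range fun x : H => Subgroup.zpowers x, (S : Set H) := by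
        intro x _
        exact Set.mem_biUnion ⟨x, rfl⟩ (Subgroup.mem_zpowers x)
      refine Set.Finite.subset (Set.Finite.biUnion h1 ?_) this
      rintro S ⟨x, rfl⟩
      exact finite_zpowers.mpr (hex x)
    exact Set.infinite_univ h2

variable (hN : {H : Subgroup G | ∀ m : ℕ, H ≠ powerSubgroup G m}.Finite)

include hN in
lemma finite_containing {m : ℕ} (hm : m ≠ 0) :
    {H : Subgroup G | powerSubgroup G m ≤ H}.Finite := by
  have hdiv : {d : ℕ | d ∣ m}.Finite := by
    refine Set.Finite.subset (Set.finite_Iic m) ?_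
    intro d hd
    exact Nat.le_of_dvd (Nat.pos_of_ne_zero hm) hd
  have hsub : {H : Subgroup G | powerSubgroup G m ≤ H} ⊆
      {H : Subgroup G | ∀ k : ℕ, H ≠ powerSubgroup G k} ∪
        (powerSubgroup G '' {d : ℕ | d ∣ m}) := by
    intro H hH
    by_cases hcase : ∀ k : ℕ, H ≠ powerSubgroup G k
    · exact Or.inl hcase
    · push_neg at hcase
      obtain ⟨k, rfl⟩ := hcase
      refine Or.inr ⟨Nat.gcd k m, Nat.gcd_dvd_right k m, ?_⟩
      rw [← power_sup]
      exact sup_eq_left.mpr hH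
  exact Set.Finite.subset (Set.Finite.union hN (Set.Finite.image _ hdiv)) hsub

include hN in
lemma power_finiteIndex {m : ℕ} (hm : m ≠ 0) : (powerSubgroup G m).FiniteIndex := by
  haveI := power_normal (G := G) m
  by_contra hFI
  have hQ : Infinite (G ⧸ powerSubgroup G m) := by
    by_contra h'
    rw [not_infinite_iff_finite] at h'
    exact hFI ((powerSubgroup G m).finiteIndex_of_finite_quotient)
  haveI := hQ
  haveI := infinite_subgroups (G ⧸ powerSubgroup G m)
  have hinj : Function.Injective fun K : Subgroup (G ⧸ powerSubgroup G m) =>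
      K.comap (QuotientGroup.mk' (powerSubgroup G m)) :=
    Subgroup.comap_injective (QuotientGroup.mk'_surjective _)
  have hmem : ∀ K : Subgroup (G ⧸ powerSubgroup G m),
      K.comap (QuotientGroup.mk' (powerSubgroup G m)) ∈
        {H : Subgroup G | powerSubgroup G m ≤ H} := by
    intro K x hx
    show QuotientGroup.mk' (powerSubgroup G m) x ∈ K
    have h1 : QuotientGroup.mk' (powerSubgroup G m) x = 1 := (QuotientGroup.eq_one_iff x).mpr hx
    rw [h1]
    exact K.one_mem
  exact Set.not_infinite.mpr (finite_containing hN hm)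
    (Set.infinite_of_injective_forall_mem hinj hmem)

include hN in
lemma nonpower_of_infinite_index {H : Subgroup G} (h1 : H ≠ ⊥) (h2 : ¬H.FiniteIndex) :
    ∀ m : ℕ, H ≠ powerSubgroup G m := by
  intro m hEq
  rcases Nat.eq_zero_or_pos m with hm | hm
  · subst hm; rw [power_zero] at hEq; exact h1 hEq
  · exact h2 (hEq ▸ power_finiteIndex hN (Nat.pos_iff_ne_zero.mp hm))

lemma not_finiteIndex_of_finite [Infinite G] {H : Subgroup G} (hH : (H : Set G).Finite) :
    ¬H.FiniteIndex := by
  intro hFI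
  haveI : Finite H := hH.to_subtype
  haveI : Finite (G ⧸ H) := H.finite_quotient_of_finiteIndex
  have : Finite G := Finite.of_equiv _ (Subgroup.groupEquivQuotientProdSubgroup (s := H)).symm
  exact not_finite G

include hN in
lemma torsion_finite [Infinite G] : {x : G | IsOfFinOrder x}.Finite := by
  classical
  have hsub : {x : G | IsOfFinOrder x} ⊆ insert (1 : G)
      (⋃ S ∈ {S ∈ {H : Subgroup G | ∀ m : ℕ, H ≠ powerSubgroup G m} | (S : Set G).Finite},
        (S : Set G)) := by
    intro x hx
    by_cases hx1 : x = 1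
    · exact Set.mem_insert_iff.mpr (Or.inl hx1)
    refine Set.mem_insert_iff.mpr (Or.inr ?_)
    have hfin : ((Subgroup.zpowers x : Subgroup G) : Set G).Finite := finite_zpowers.mpr hx
    refine Set.mem_biUnion ?_ (Subgroup.mem_zpowers x)
    exact ⟨nonpower_of_infinite_index hN (Subgroup.zpowers_eq_bot.not.mpr hx1)
      (not_finiteIndex_of_finite hfin), hfin⟩
  exact Set.Finite.subset (((Set.Finite.subset hN fun S hS => hS.1).biUnion
    fun S hS => hS.2).insert 1) hsub

include hN in
lemma exists_fi_zpowers [Infinite G] :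
    ∃ h : G, ¬IsOfFinOrder h ∧ (Subgroup.zpowers h).FiniteIndex := by
  have hg : ∃ g : G, ¬IsOfFinOrder g := by
    by_contra hall
    push_neg at hall
    exact Set.infinite_univ (Set.Finite.subset (torsion_finite hN) fun x _ => hall x)
  obtain ⟨g, hg⟩ := hg
  by_contra hno
  push_neg at hno
  have hmem : ∀ i : ℕ, Subgroup.zpowers (g ^ 2 ^ i) ∈
      {H : Subgroup G | ∀ m : ℕ, H ≠ powerSubgroup G m} := by
    intro i
    have hi : ¬IsOfFinOrder (g ^ 2 ^ i) := fun hf => hg (hf.of_pow (by positivity))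
    refine nonpower_of_infinite_index hN ?_ (hno _ hi)
    rw [Ne, Subgroup.zpowers_eq_bot]
    intro h1
    exact hi (h1 ▸ IsOfFinOrder.one)
  exact Set.not_infinite.mpr hN
    (Set.infinite_of_injective_forall_mem (zpowers_pow_injective hg) hmem)


/-- The subgroup `{ t^α u^β }` generated by two commuting elements. -/
def pairSub (t u : G) (h : Commute t u) : Subgroup G where
  carrier := {x | ∃ α β : ℤ, x = t ^ α * u ^ β}
  one_mem' := ⟨0, 0, by simp⟩
  mul_mem' := by
    rintro x y ⟨α, β, rfl⟩ ⟨α', β', rfl⟩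
    refine ⟨α + α', β + β', ?_⟩
    have hc : u ^ β * t ^ α' = t ^ α' * u ^ β := ((h.symm).zpow_zpow β α').eq
    have h1 : t ^ α * u ^ β * (t ^ α' * u ^ β') = t ^ α * (u ^ β * t ^ α') * u ^ β' := by
      group
    rw [h1, hc, zpow_add, zpow_add]
    group
  inv_mem' := by
    rintro x ⟨α, β, rfl⟩
    refine ⟨-α, -β, ?_⟩
    have hc : u ^ (-β) * t ^ (-α) = t ^ (-α) * u ^ (-β) := ((h.symm).zpow_zpow _ _).eq
    rw [mul_inv_rev, ← zpow_neg, ← zpow_neg, hc]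

lemma mem_pairSub {t u : G} {h : Commute t u} {x : G} :
    x ∈ pairSub t u h ↔ ∃ α β : ℤ, x = t ^ α * u ^ β := Iff.rfl

lemma tor_tf_eq {t u : G} (ht : IsOfFinOrder t) (hu : ¬IsOfFinOrder u) {α β : ℤ}
    (h : t ^ α = u ^ β) : t ^ α = 1 ∧ β = 0 := by
  have hβ : β = 0 := by
    by_contra hβ
    have hfin : IsOfFinOrder (u ^ β) := h ▸ ht.zpow
    obtain ⟨n, hn0, hn⟩ := isOfFinOrder_iff_pow_eq_one.mp hfin
    rw [← zpow_natCast (u ^ β) n, ← zpow_mul] at hn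
    have h0 : u ^ (β * (n:ℤ)) = u ^ (0:ℤ) := by rw [hn, zpow_zero]
    have := injective_zpow_iff_not_isOfFinOrder.mpr hu h0
    have hn0' : (n:ℤ) ≠ 0 := by exact_mod_cast hn0.ne'
    exact mul_ne_zero hβ hn0' this
  subst hβ
  exact ⟨by simpa using h, rfl⟩

include hN in
lemma lemX {t u : G} (htu : Commute t u) (ht1 : t ≠ 1) {q : ℕ} (hq : q.Prime)
    (htq : t ^ q = 1) (hu : ¬IsOfFinOrder u) : False := by
  classical
  haveI : Fact (Nat.Prime q) := ⟨hq⟩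
  have hordt : orderOf t = q := orderOf_eq_prime htq ht1
  have htfin : IsOfFinOrder t := isOfFinOrder_iff_pow_eq_one.mpr ⟨q, hq.pos, htq⟩
  set S : ℕ → Subgroup G := fun j => Subgroup.zpowers (t * u ^ j) with hSdef
  have hpow : ∀ (j : ℕ) (k : ℤ), (t * u ^ j) ^ k = t ^ k * u ^ ((j : ℤ) * k) := by
    intro j k
    rw [(htu.pow_right j).mul_zpow]
    congr 1
    rw [← zpow_natCast u j, ← zpow_mul]
  have hSinj : Function.Injective S := by
    have key : ∀ i j : ℕ, S i = S j → ∃ k : ℤ, (i : ℤ) = (j : ℤ) * k := by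
      intro i j hij
      have hmem : t * u ^ i ∈ S j := hij ▸ Subgroup.mem_zpowers _
      obtain ⟨k, hk⟩ := Subgroup.mem_zpowers_iff.mp hmem
      rw [hpow] at hk
      have h2 : t ^ k * u ^ ((j:ℤ) * k) = t ^ (1:ℤ) * u ^ ((i:ℤ)) := by
        rw [zpow_one, zpow_natCast]; exact hk
      have heq : t ^ (k - 1) = u ^ ((i:ℤ) - (j:ℤ) * k) := by
        calc t ^ (k - 1)
            = t ^ (-(1:ℤ)) * (t ^ k * u ^ ((j:ℤ) * k)) * u ^ (-((j:ℤ) * k)) := by group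
          _ = t ^ (-(1:ℤ)) * (t ^ (1:ℤ) * u ^ ((i:ℤ))) * u ^ (-((j:ℤ) * k)) := by rw [h2]
          _ = u ^ ((i:ℤ) - (j:ℤ) * k) := by group
      obtain ⟨-, h4⟩ := tor_tf_eq htfin hu heq
      exact ⟨k, by linarith [sub_eq_zero.mp h4]⟩
    intro i j hij
    obtain ⟨k, hk⟩ := key i j hij
    obtain ⟨k', hk'⟩ := key j i hij.symm
    by_cases hi0 : (i : ℤ) = 0
    · have : (j : ℤ) = 0 := by rw [hk', hi0, zero_mul]
      omega
    · have hkk : k' * k = 1 := by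
        have h5 : (i : ℤ) * 1 = (i : ℤ) * (k' * k) := by
          rw [mul_one]
          calc (i:ℤ) = (j:ℤ) * k := hk
            _ = ((i:ℤ) * k') * k := by rw [← hk']
            _ = (i:ℤ) * (k' * k) := by ring
        exact (mul_left_cancel₀ hi0 h5).symm
      rcases Int.eq_one_or_neg_one_of_mul_eq_one' hkk with ⟨-, h1⟩ | ⟨-, h1⟩
      · subst h1; omega
      · subst h1; omega
  have hSne : ∀ j : ℕ, t * u ^ j ≠ 1 := by
    intro j hj
    have h1 : t ^ (1:ℤ) = u ^ (-(j:ℤ)) := by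
      rw [zpow_one]
      have : t = (u ^ j)⁻¹ := eq_inv_of_mul_eq_one_left hj
      rw [this, ← zpow_natCast u j, ← zpow_neg]
    obtain ⟨h3, -⟩ := tor_tf_eq htfin hu h1
    exact ht1 (by simpa using h3)
  have hM : ∃ M : ℕ, ∀ j ≥ M, ∃ a : ℕ, a ≠ 0 ∧ S j = powerSubgroup G a := by
    have hB : (S ⁻¹' {H : Subgroup G | ∀ m : ℕ, H ≠ powerSubgroup G m}).Finite :=
      hN.preimage hSinj.injOn
    obtain ⟨M, hMub⟩ := hB.bddAbove
    refine ⟨M + 1, fun j hj => ?_⟩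
    have hjB : j ∉ S ⁻¹' {H : Subgroup G | ∀ m : ℕ, H ≠ powerSubgroup G m} := by
      intro hB'
      have := hMub hB'
      omega
    simp only [Set.mem_preimage, Set.mem_setOf_eq] at hjB
    push_neg at hjB
    obtain ⟨a, ha⟩ := hjB
    refine ⟨a, fun ha0 => ?_, ha⟩
    rw [ha0, power_zero] at ha
    exact hSne j (Subgroup.zpowers_eq_bot.mp ha)
  obtain ⟨M, hM⟩ := hM
  set W := pairSub t u htu with hWdef
  have ht_in_W : t ∈ W := ⟨1, 0, by simp⟩
  have hu_in_W : u ∈ W := ⟨0, 1, by simp⟩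
  have hSW : ∀ j : ℕ, S j ≤ W :=
    fun j => Subgroup.zpowers_le.mpr ⟨1, (j:ℤ), by rw [zpow_one, zpow_natCast]⟩
  obtain ⟨aM, haM0, hSaM⟩ := hM M le_rfl
  obtain ⟨aM1, haM10, hSaM1⟩ := hM (M+1) (by omega)
  have hWsup : S M ⊔ S (M + 1) = W := by
    refine le_antisymm (sup_le (hSW M) (hSW (M+1))) ?_
    have hm1 : t * u ^ (M+1) ∈ S M ⊔ S (M+1) :=
      (le_sup_right : S (M+1) ≤ _) (Subgroup.mem_zpowers _)
    have hm0 : t * u ^ M ∈ S M ⊔ S (M+1) :=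
      (le_sup_left : S M ≤ _) (Subgroup.mem_zpowers _)
    have hu_mem : u ∈ S M ⊔ S (M+1) := by
      have hcalc : (t * u ^ (M+1)) * (t * u ^ M)⁻¹ = u := by
        rw [pow_succ]
        have h6 : t * (u ^ M * u) * (t * u ^ M)⁻¹ = t * u * t⁻¹ := by group
        rw [h6, htu.eq, mul_inv_cancel_right]
      exact hcalc ▸ mul_mem hm1 (inv_mem hm0)
    have ht_mem : t ∈ S M ⊔ S (M+1) := by
      have hcalc : (t * u ^ M) * (u ^ M)⁻¹ = t := mul_inv_cancel_right t (u ^ M)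
      exact hcalc ▸ mul_mem hm0 (inv_mem (pow_mem hu_mem M))
    rintro x ⟨α, β, rfl⟩
    exact mul_mem (Subgroup.zpow_mem _ ht_mem α) (Subgroup.zpow_mem _ hu_mem β)
  set c := Nat.gcd aM aM1 with hcdef
  have hWc : W = powerSubgroup G c := by rw [← hWsup, hSaM, hSaM1, power_sup]
  have hc0 : c ≠ 0 := fun hcz => haM0 (Nat.eq_zero_of_gcd_eq_zero_left hcz)
  -- the decisive index
  set j := q ^ c * (M + 1) with hjdef
  have hjM : j ≥ M := by
    have h1 : q ^ c ≥ 1 := Nat.one_le_pow _ _ hq.pos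
    calc M ≤ M + 1 := by omega
      _ = 1 * (M+1) := by omega
      _ ≤ q ^ c * (M + 1) := Nat.mul_le_mul_right _ h1
  obtain ⟨aj, haj0, hSaj⟩ := hM j hjM
  have hdvd1 : (j * q : ℕ) ∣ aj := by
    have humem : u ^ aj ∈ S j := hSaj ▸ pow_mem_power aj u
    obtain ⟨k, hk⟩ := Subgroup.mem_zpowers_iff.mp humem
    rw [hpow] at hk
    have heq : t ^ k = u ^ ((aj:ℤ) - (j:ℤ) * k) := by
      calc t ^ k = (t ^ k * u ^ ((j:ℤ) * k)) * u ^ (-((j:ℤ) * k)) := by group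
        _ = u ^ ((aj:ℤ)) * u ^ (-((j:ℤ) * k)) := by rw [hk, zpow_natCast]
        _ = u ^ ((aj:ℤ) - (j:ℤ) * k) := by group
    obtain ⟨h3, h4⟩ := tor_tf_eq htfin hu heq
    have hqk : (q:ℤ) ∣ k := by
      have hdv := orderOf_dvd_iff_zpow_eq_one.mpr h3
      rwa [hordt] at hdv
    obtain ⟨k', rfl⟩ := hqk
    have haj_eq : (aj:ℤ) = (j:ℤ) * ((q:ℤ) * k') := by
      have := sub_eq_zero.mp h4
      linarith
    have hzd : ((j * q : ℕ) : ℤ) ∣ (aj : ℤ) := ⟨k', by push_cast; linarith⟩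
    exact_mod_cast hzd
  set cs := Nat.gcd aj c with hcsdef
  have hcsW : powerSubgroup G cs = W := by
    rw [hcsdef, ← power_sup, ← hSaj, ← hWc]
    exact sup_eq_right.mpr (hSW j)
  set r := aj / cs with hrdef
  have hcs_dvd : cs ∣ aj := Nat.gcd_dvd_left _ _
  have har : aj = cs * r := (Nat.mul_div_cancel' hcs_dvd).symm
  have hV : S j ≤ pairSub (t ^ r) (u ^ r) (htu.pow_pow r r) := by
    rw [hSaj]
    refine (Subgroup.closure_le _).mpr ?_
    rintro x ⟨g, rfl⟩
    have hgcs : g ^ cs ∈ W := by rw [← hcsW]; exact pow_mem_power cs g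
    obtain ⟨α, β, hαβ⟩ := hgcs
    show g ^ aj ∈ _
    have hsplit : g ^ aj = (t ^ α * u ^ β) ^ r := by rw [har, pow_mul, hαβ]
    have e1 : (t ^ α) ^ r = (t ^ r) ^ α := by
      rw [← zpow_natCast (t ^ α) r, ← zpow_mul, ← zpow_natCast t r, ← zpow_mul, mul_comm]
    have e2 : (u ^ β) ^ r = (u ^ r) ^ β := by
      rw [← zpow_natCast (u ^ β) r, ← zpow_mul, ← zpow_natCast u r, ← zpow_mul, mul_comm]
    exact ⟨α, β, by rw [hsplit, (htu.zpow_zpow α β).mul_pow, e1, e2]⟩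
  obtain ⟨α, β, hαβ⟩ := hV (Subgroup.mem_zpowers (t * u ^ j))
  have heq2 : t ^ (1 - (r:ℤ) * α) = u ^ ((r:ℤ) * β - (j:ℤ)) := by
    have h5 : t ^ (1:ℤ) * u ^ ((j:ℤ)) = t ^ ((r:ℤ) * α) * u ^ ((r:ℤ) * β) := by
      rw [zpow_one, zpow_natCast, hαβ]
      congr 1
      · rw [← zpow_natCast t r, ← zpow_mul]
      · rw [← zpow_natCast u r, ← zpow_mul]
    calc t ^ (1 - (r:ℤ) * α)
        = t ^ (-((r:ℤ) * α)) * (t ^ (1:ℤ) * u ^ ((j:ℤ))) * u ^ (-((j:ℤ))) := by group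
      _ = t ^ (-((r:ℤ) * α)) * (t ^ ((r:ℤ) * α) * u ^ ((r:ℤ) * β)) * u ^ (-((j:ℤ))) := by rw [h5]
      _ = u ^ ((r:ℤ) * β - (j:ℤ)) := by group
  obtain ⟨h6, -⟩ := tor_tf_eq htfin hu heq2
  have hqr : ¬ (q:ℕ) ∣ r := by
    intro hqr
    have hdvd : (q:ℤ) ∣ (1 - (r:ℤ) * α) := by
      have hdv := orderOf_dvd_iff_zpow_eq_one.mpr h6
      rwa [hordt] at hdv
    have hqrz : (q:ℤ) ∣ (r:ℤ) * α := Dvd.dvd.mul_right (Int.natCast_dvd_natCast.mpr hqr) α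
    have hq1 : (q:ℤ) ∣ 1 := by
      have := dvd_add hdvd hqrz
      rwa [sub_add_cancel] at this
    have := Int.le_of_dvd one_pos hq1
    have hq2 : (2:ℤ) ≤ (q:ℤ) := by exact_mod_cast hq.two_le
    omega
  have h8 : (q:ℕ) ^ (c+1) ∣ aj := by
    have h7 : q ^ (c+1) ∣ j * q := ⟨M + 1, by rw [hjdef]; ring⟩
    exact h7.trans hdvd1
  have hcop : Nat.Coprime (q ^ (c+1)) r :=
    Nat.Coprime.pow_left _ ((Nat.Prime.coprime_iff_not_dvd hq).mpr hqr)
  have h9 : q ^ (c+1) ∣ cs := by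
    rw [har] at h8
    exact (Nat.Coprime.dvd_of_dvd_mul_right hcop h8)
  have h10 : q ^ (c+1) ∣ c := h9.trans (Nat.gcd_dvd_right aj c)
  have h11 : q ^ (c+1) ≤ c := Nat.le_of_dvd (Nat.pos_of_ne_zero hc0) h10
  have h12 : 2 ^ (c+1) ≤ c := le_trans (Nat.pow_le_pow_left hq.two_le _) h11
  have h13 := Nat.lt_two_pow_self (n := c)
  have h14 : (2:ℕ) ^ c ≤ 2 ^ (c+1) := Nat.pow_le_pow_right (by omega) (by omega)
  omega

include hN in
lemma torsion_free [Infinite G] : ∀ t : G, IsOfFinOrder t → t = 1 := by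
  intro t ht
  by_contra ht1
  obtain ⟨h₀, hh₀, hfi⟩ := exists_fi_zpowers hN
  have htorfin := torsion_finite hN
  set Ct := Subgroup.centralizer ({t} : Set G) with hCt
  have hCtfi : Ct.FiniteIndex := by
    have hwd : ∀ g₁ g₂ : G, (QuotientGroup.leftRel Ct) g₁ g₂ →
        g₁ * t * g₁⁻¹ = g₂ * t * g₂⁻¹ := by
      intro g₁ g₂ hrel
      rw [QuotientGroup.leftRel_apply] at hrel
      have hcomm := Subgroup.mem_centralizer_iff.mp hrel t (Set.mem_singleton t)
      calc g₁ * t * g₁⁻¹ = g₁ * (t * (g₁⁻¹ * g₂)) * g₂⁻¹ := by group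
        _ = g₁ * ((g₁⁻¹ * g₂) * t) * g₂⁻¹ := by rw [hcomm]
        _ = g₂ * t * g₂⁻¹ := by group
    let F : G ⧸ Ct → G := Quotient.lift (fun g => g * t * g⁻¹) hwd
    have hFinj : Function.Injective F := by
      intro x y
      induction x using Quotient.inductionOn with | _ g₁ =>
      induction y using Quotient.inductionOn with | _ g₂ =>
      intro hxy
      have hxy' : g₁ * t * g₁⁻¹ = g₂ * t * g₂⁻¹ := hxy
      apply Quotient.sound
      have hmem : g₁⁻¹ * g₂ ∈ Ct := by
        apply Subgroup.mem_centralizer_iff.mpr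
        intro s hs
        rw [Set.mem_singleton_iff] at hs
        rw [hs]
        have h7 : t * (g₁⁻¹ * g₂) = g₁⁻¹ * (g₁ * t * g₁⁻¹) * g₂ := by group
        rw [h7, hxy']
        group
      exact QuotientGroup.leftRel_apply.mpr hmem
    have hFtor : ∀ x : G ⧸ Ct, IsOfFinOrder (F x) := by
      intro x
      induction x using Quotient.inductionOn with | _ g =>
      obtain ⟨n, hn0, hn⟩ := isOfFinOrder_iff_pow_eq_one.mp ht
      refine isOfFinOrder_iff_pow_eq_one.mpr ⟨n, hn0, ?_⟩
      show (g * t * g⁻¹) ^ n = 1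
      rw [conj_pow, hn]
      group
    haveI := htorfin.to_subtype
    have : Finite (G ⧸ Ct) := Finite.of_injective
      (fun x => (⟨F x, hFtor x⟩ : {y : G | IsOfFinOrder y}))
      (fun x y hxy => hFinj (congrArg Subtype.val hxy))
    exact Ct.finiteIndex_of_finite_quotient
  haveI := hCtfi
  haveI := hfi
  have hD : (Ct ⊓ Subgroup.zpowers h₀).FiniteIndex := inferInstance
  have hDinf : ¬((Ct ⊓ Subgroup.zpowers h₀ : Subgroup G) : Set G).Finite := fun hfin =>
    not_finiteIndex_of_finite hfin hD
  have hne : ((((Ct ⊓ Subgroup.zpowers h₀ : Subgroup G) : Set G)) \ {1}).Nonempty :=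
    Set.Infinite.nonempty (Set.Infinite.diff hDinf (Set.finite_singleton 1))
  obtain ⟨z, hzD, hz1⟩ := hne
  rw [Set.mem_singleton_iff] at hz1
  have hzD' : z ∈ Ct ⊓ Subgroup.zpowers h₀ := hzD
  obtain ⟨k, hk⟩ := Subgroup.mem_zpowers_iff.mp hzD'.2
  have hzinf : ¬IsOfFinOrder z := by
    intro hzf
    obtain ⟨n, hn0, hn⟩ := isOfFinOrder_iff_pow_eq_one.mp hzf
    have hEq : h₀ ^ (k * (n:ℤ)) = h₀ ^ (0:ℤ) := by
      rw [zpow_mul, hk, zpow_zero, zpow_natCast, hn]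
    have hkn := injective_zpow_iff_not_isOfFinOrder.mpr hh₀ hEq
    have hk0 : k = 0 := by
      rcases mul_eq_zero.mp hkn with h | h
      · exact h
      · exfalso; exact hn0.ne' (by exact_mod_cast h)
    rw [hk0, zpow_zero] at hk
    exact hz1 hk.symm
  have hcz : Commute t z := by
    have := Subgroup.mem_centralizer_iff.mp hzD'.1 t (Set.mem_singleton t)
    exact this
  have hn1 : orderOf t ≠ 1 := fun h1 => ht1 (orderOf_eq_one_iff.mp h1)
  have hn0 : orderOf t ≠ 0 := ht.orderOf_pos.ne'
  have hp : (orderOf t).minFac.Prime := Nat.minFac_prime hn1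
  have ht'q : (t ^ (orderOf t / (orderOf t).minFac)) ^ (orderOf t).minFac = 1 := by
    rw [← pow_mul, Nat.div_mul_cancel (Nat.minFac_dvd _), pow_orderOf_eq_one]
  have ht'1 : t ^ (orderOf t / (orderOf t).minFac) ≠ 1 := by
    intro h1
    have hdvd := orderOf_dvd_of_pow_eq_one h1
    have hpos : 0 < orderOf t / (orderOf t).minFac :=
      Nat.div_pos (Nat.minFac_le (Nat.pos_of_ne_zero hn0)) hp.pos
    have hle := Nat.le_of_dvd hpos hdvd
    have hlt : orderOf t / (orderOf t).minFac < orderOf t :=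
      Nat.div_lt_self (Nat.pos_of_ne_zero hn0) hp.one_lt
    omega
  exact lemX hN (hcz.pow_left _) ht'1 hp ht'q hzinf

include hN in
lemma main_contr [Infinite G] (hnc : ¬IsCyclic G) : False := by
  classical
  obtain ⟨h₀, hh₀, hfi₀⟩ := exists_fi_zpowers hN
  have htf := torsion_free hN
  haveI := hfi₀
  set Z := (Subgroup.zpowers h₀).normalCore with hZdef
  haveI hZfi : Z.FiniteIndex := (Subgroup.zpowers h₀).finiteIndex_normalCore
  haveI hZn : Z.Normal := Subgroup.normalCore_normal _
  have hidx0 : Z.index ≠ 0 := hZfi.index_ne_zero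
  set E := {n : ℕ | 0 < n ∧ h₀ ^ n ∈ Z} with hEdef
  have hEne : Z.index ∈ E := ⟨Nat.pos_of_ne_zero hidx0, Z.pow_index_mem h₀⟩
  set k := sInf E with hkdef
  have hkE : k ∈ E := Nat.sInf_mem ⟨_, hEne⟩
  set h := h₀ ^ k with hhdef
  have hhZ : h ∈ Z := hkE.2
  have hhinf : ¬IsOfFinOrder h := fun hf => hh₀ (hf.of_pow hkE.1.ne')
  have hh1 : h ≠ 1 := fun h1 => hhinf (h1 ▸ IsOfFinOrder.one)
  have hZeq : Z = Subgroup.zpowers h := by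
    refine le_antisymm ?_ (Subgroup.zpowers_le.mpr hhZ)
    intro z hz
    have hzZ₀ : z ∈ Subgroup.zpowers h₀ := Subgroup.normalCore_le _ hz
    obtain ⟨m, hm⟩ := Subgroup.mem_zpowers_iff.mp hzZ₀
    have hk0 : (0:ℤ) < (k:ℤ) := by exact_mod_cast hkE.1
    have hmod : h₀ ^ (m % (k:ℤ)) ∈ Z := by
      have hsplit : m % (k:ℤ) = m - (k:ℤ) * (m / (k:ℤ)) := Int.emod_def m (k:ℤ)
      rw [hsplit, zpow_sub, zpow_mul, zpow_natCast, ← hhdef, hm]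
      exact Subgroup.mul_mem _ hz (Subgroup.inv_mem _ (Subgroup.zpow_mem _ hhZ _))
    have hr0 : m % (k:ℤ) = 0 := by
      by_contra hr
      have hrnn : 0 ≤ m % (k:ℤ) := Int.emod_nonneg m hk0.ne'
      have hrlt : m % (k:ℤ) < (k:ℤ) := Int.emod_lt_of_pos m hk0
      have hrE : (m % (k:ℤ)).toNat ∈ E := by
        refine ⟨by omega, ?_⟩
        have : h₀ ^ (((m % (k:ℤ)).toNat : ℤ)) ∈ Z := by
          rw [Int.toNat_of_nonneg hrnn]; exact hmod
        rwa [zpow_natCast] at this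
      have := Nat.sInf_le hrE
      omega
    refine Subgroup.mem_zpowers_iff.mpr ⟨m / (k:ℤ), ?_⟩
    have hmk : (k:ℤ) * (m / (k:ℤ)) = m := by
      have := Int.mul_ediv_add_emod m (k:ℤ)
      omega
    rw [hhdef, ← zpow_natCast h₀ k, ← zpow_mul, hmk, hm]
  have hconj : ∀ g : G, g * h * g⁻¹ = h ∨ g * h * g⁻¹ = h⁻¹ := by
    intro g
    have h1 : g * h * g⁻¹ ∈ Z := hZn.conj_mem h hhZ g
    rw [hZeq] at h1
    obtain ⟨e, he⟩ := Subgroup.mem_zpowers_iff.mp h1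
    have h2 : g⁻¹ * h * g ∈ Z := by
      have := hZn.conj_mem h hhZ g⁻¹
      simpa using this
    rw [hZeq] at h2
    obtain ⟨e', he'⟩ := Subgroup.mem_zpowers_iff.mp h2
    have hcomp : h ^ (e' * e) = h := by
      have hgg : g⁻¹ * h * g = g⁻¹ * h * (g⁻¹)⁻¹ := by rw [inv_inv]
      calc h ^ (e' * e) = (h ^ e') ^ e := by rw [zpow_mul]
        _ = (g⁻¹ * h * (g⁻¹)⁻¹) ^ e := by rw [he', hgg]
        _ = g⁻¹ * h ^ e * (g⁻¹)⁻¹ := conj_zpow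
        _ = g⁻¹ * (g * h * g⁻¹) * g := by rw [he, inv_inv]
        _ = h := by group
    have hee : e' * e = 1 := by
      have hinj := injective_zpow_iff_not_isOfFinOrder.mpr hhinf
      have : h ^ (e' * e) = h ^ (1:ℤ) := by rw [hcomp, zpow_one]
      exact hinj this
    rcases Int.eq_one_or_neg_one_of_mul_eq_one' hee with ⟨-, h5⟩ | ⟨-, h5⟩
    · left; rw [← he, h5, zpow_one]
    · right; rw [← he, h5]
      exact zpow_neg_one h
  set C := Subgroup.centralizer ({h} : Set G) with hCdef
  have hmemC : ∀ x : G, x ∈ C ↔ h * x = x * h := by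
    intro x
    constructor
    · intro hx
      exact Subgroup.mem_centralizer_iff.mp hx h (Set.mem_singleton h)
    · intro hx
      refine Subgroup.mem_centralizer_iff.mpr fun s hs => ?_
      rw [Set.mem_singleton_iff] at hs
      rw [hs]
      exact hx
  have hhC : h ∈ C := (hmemC h).mpr rfl
  have hZC : Z ≤ C := by
    rw [hZeq]
    intro z hz
    obtain ⟨m, rfl⟩ := Subgroup.mem_zpowers_iff.mp hz
    exact (hmemC _).mpr ((Commute.refl h).zpow_right m).eq
  haveI hCfi : C.FiniteIndex := Subgroup.finiteIndex_of_le hZC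
  have hCnormal : C.Normal := by
    constructor
    intro n hn g
    rw [hmemC] at hn
    rw [hmemC]
    rcases hconj g⁻¹ with hcase | hcase
    · have hcase' : g⁻¹ * h * g = h := by simpa using hcase
      calc h * (g * n * g⁻¹) = g * ((g⁻¹ * h * g) * n) * g⁻¹ := by group
        _ = g * (h * n) * g⁻¹ := by rw [hcase']
        _ = g * (n * h) * g⁻¹ := by rw [hn]
        _ = g * n * (g⁻¹ * h * g) * g⁻¹ := by rw [hcase']; group
        _ = (g * n * g⁻¹) * h := by group
    · have hcase' : g⁻¹ * h * g = h⁻¹ := by simpa using hcase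
      have hcn : Commute h n := hn
      have hn' : h⁻¹ * n = n * h⁻¹ := (hcn.inv_left).eq
      calc h * (g * n * g⁻¹) = g * ((g⁻¹ * h * g) * n) * g⁻¹ := by group
        _ = g * (h⁻¹ * n) * g⁻¹ := by rw [hcase']
        _ = g * (n * h⁻¹) * g⁻¹ := by rw [hn']
        _ = g * n * (g⁻¹ * h * g) * g⁻¹ := by rw [hcase']; group
        _ = (g * n * g⁻¹) * h := by group
  -- C is commutative
  have hcommC : ∀ x y : ↥C, x * y = y * x := by
    have hZsub : Z.subgroupOf C ≤ Subgroup.center ↥C := by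
      intro x hx
      have hxv : (x : G) ∈ Subgroup.zpowers h := by
        rw [← hZeq]
        exact Subgroup.mem_subgroupOf.mp hx
      obtain ⟨m, hm⟩ := Subgroup.mem_zpowers_iff.mp hxv
      rw [Subgroup.mem_center_iff]
      intro g
      apply Subtype.ext
      show (g : G) * (x : G) = (x : G) * (g : G)
      rw [← hm]
      have hgh : Commute (g : G) h := ((hmemC (g:G)).mp g.2).symm
      exact (hgh.zpow_right m).eq
    haveI hZsubfi : (Z.subgroupOf C).FiniteIndex := by
      constructor
      have hdvd : Z.relIndex C ∣ Z.index := Subgroup.relIndex_dvd_index_of_normal Z C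
      intro h0
      have hrel0 : Z.relIndex C = 0 := h0
      rw [hrel0] at hdvd
      exact hidx0 (zero_dvd_iff.mp hdvd)
    haveI : (Subgroup.center ↥C).FiniteIndex := Subgroup.finiteIndex_of_le hZsub
    have hinj : Function.Injective (MonoidHom.transferCenterPow ↥C) := by
      refine (injective_iff_map_eq_one _).mpr fun a ha => ?_
      have hval : (a : G) ^ (Subgroup.center ↥C).index = 1 := by
        have h1 := congrArg (Subtype.val ∘ Subtype.val) ha
        simpa [MonoidHom.transferCenterPow_apply] using h1
      have hidxC0 : (Subgroup.center ↥C).index ≠ 0 :=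
        Subgroup.FiniteIndex.index_ne_zero
      have : IsOfFinOrder (a : G) :=
        isOfFinOrder_iff_pow_eq_one.mpr ⟨_, Nat.pos_of_ne_zero hidxC0, hval⟩
      exact Subtype.ext (htf _ this)
    intro x y
    exact hinj (show MonoidHom.transferCenterPow ↥C (x * y) = MonoidHom.transferCenterPow ↥C (y * x) by
      rw [map_mul, map_mul]; exact Subtype.ext (Subgroup.mem_center_iff.mp (MonoidHom.transferCenterPow ↥C y).2 _))
  -- generator of C
  set m₁ := (Z.subgroupOf C).index with hm₁def
  haveI hZsubfi : (Z.subgroupOf C).FiniteIndex := by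
    constructor
    have hdvd : Z.relIndex C ∣ Z.index := Subgroup.relIndex_dvd_index_of_normal Z C
    intro h0
    have hrel0 : Z.relIndex C = 0 := h0
    rw [hrel0] at hdvd
    exact hidx0 (zero_dvd_iff.mp hdvd)
  have hm₁0 : m₁ ≠ 0 := hZsubfi.index_ne_zero
  haveI hZsubnormal : (Z.subgroupOf C).Normal := by
    constructor
    intro n hn g
    have : g * n * g⁻¹ = n := by rw [hcommC g n]; group
    rw [this]
    exact hn
  set c₀ : ↥C := ⟨h, hhC⟩ with hc₀def
  have hc₀inf : ¬IsOfFinOrder c₀ := by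
    intro hf
    obtain ⟨n, hn0, hn⟩ := isOfFinOrder_iff_pow_eq_one.mp hf
    have : h ^ n = 1 := by
      have := congrArg Subtype.val hn
      simpa using this
    exact hhinf (isOfFinOrder_iff_pow_eq_one.mpr ⟨n, hn0, this⟩)
  have hc₀inj := injective_zpow_iff_not_isOfFinOrder.mpr hc₀inf
  have hrep : ∀ x : ↥C, ∃ e : ℤ, x ^ m₁ = c₀ ^ e := by
    intro x
    have hmem := (Z.subgroupOf C).pow_index_mem x
    rw [← hm₁def] at hmem
    have : ((x ^ m₁ : ↥C) : G) ∈ Subgroup.zpowers h := by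
      rw [← hZeq]
      exact Subgroup.mem_subgroupOf.mp hmem
    obtain ⟨e, he⟩ := Subgroup.mem_zpowers_iff.mp this
    refine ⟨e, Subtype.ext ?_⟩
    rw [← he]
    simp [hc₀def]
  set A : AddSubgroup ℤ :=
    { carrier := {e : ℤ | ∃ x : ↥C, x ^ m₁ = c₀ ^ e}
      zero_mem' := ⟨1, by simp⟩
      add_mem' := by
        rintro e₁ e₂ ⟨x₁, hx₁⟩ ⟨x₂, hx₂⟩
        refine ⟨x₁ * x₂, ?_⟩
        have hcomm : Commute x₁ x₂ := hcommC x₁ x₂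
        rw [hcomm.mul_pow, hx₁, hx₂, zpow_add]
      neg_mem' := by
        rintro e ⟨x, hx⟩
        exact ⟨x⁻¹, by rw [inv_pow, hx, zpow_neg]⟩ } with hAdef
  obtain ⟨a, hA⟩ := Int.subgroup_cyclic A
  have haA : a ∈ A := by
    rw [hA]
    exact AddSubgroup.subset_closure (Set.mem_singleton a)
  obtain ⟨xw, hxw⟩ := haA
  have hgen : ∀ x : ↥C, ∃ n : ℤ, x = xw ^ n := by
    intro x
    obtain ⟨e, he⟩ := hrep x
    have heA : e ∈ A := ⟨x, he⟩
    rw [hA] at heA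
    obtain ⟨n, hn⟩ := AddSubgroup.mem_closure_singleton.mp heA
    refine ⟨n, ?_⟩
    have h1 : x ^ m₁ = (xw ^ n) ^ m₁ := by
      rw [he, ← hn, zsmul_eq_mul, mul_comm, zpow_mul, ← hxw]
      rw [← zpow_natCast (xw ^ n) m₁, ← zpow_natCast xw m₁, ← zpow_mul, ← zpow_mul, mul_comm]
      norm_cast
    have h2 : (x * (xw ^ n)⁻¹) ^ m₁ = 1 := by
      have hcm : Commute x ((xw ^ n)⁻¹) := hcommC x ((xw ^ n)⁻¹)
      rw [hcm.mul_pow, inv_pow, h1, mul_inv_cancel]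
    have h3 : (x * (xw ^ n)⁻¹ : ↥C) = 1 := by
      have hvv : ((x * (xw ^ n)⁻¹ : ↥C) : G) ^ m₁ = 1 := by
        have := congrArg Subtype.val h2
        simpa using this
      have htor : IsOfFinOrder ((x * (xw ^ n)⁻¹ : ↥C) : G) :=
        isOfFinOrder_iff_pow_eq_one.mpr ⟨m₁, Nat.pos_of_ne_zero hm₁0, hvv⟩
      exact Subtype.ext (htf _ htor)
    have := mul_inv_eq_one.mp h3
    exact this
  -- endgame
  by_cases hCtop : C = ⊤
  · apply hnc
    constructor
    refine ⟨(xw : G), fun x => ?_⟩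
    have hx : x ∈ C := hCtop ▸ Subgroup.mem_top x
    obtain ⟨n, hn⟩ := hgen ⟨x, hx⟩
    refine Subgroup.mem_zpowers_iff.mpr ⟨n, ?_⟩
    have := congrArg Subtype.val hn
    simpa using this.symm
  · have hxex : ∃ x : G, x ∉ C := by
      by_contra hall
      push_neg at hall
      exact hCtop ((Subgroup.eq_top_iff' C).mpr hall)
    obtain ⟨x, hx⟩ := hxex
    set w := (xw : G) with hwdef
    have hwC : w ∈ C := xw.2
    have hw1 : w ≠ 1 := by
      intro h1
      obtain ⟨nh, hnh⟩ := hgen ⟨h, hhC⟩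
      have hval := congrArg Subtype.val hnh
      simp only [] at hval
      rw [show ((xw ^ nh : ↥C) : G) = w ^ nh by simp [hwdef]] at hval
      rw [h1, one_zpow] at hval
      exact hh1 hval
    have hwinf : ¬IsOfFinOrder w := fun hf => hw1 (htf w hf)
    have hwinj := injective_zpow_iff_not_isOfFinOrder.mpr hwinf
    have hxh : x * h * x⁻¹ = h⁻¹ := by
      rcases hconj x with hc | hc
      · exfalso
        apply hx
        refine (hmemC x).mpr ?_
        have hxhc : x * h = h * x := by
          conv_rhs => rw [← hc]
          group
        exact hxhc.symm
      · exact hc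
    have hx2 : x * x ∈ C := by
      refine (hmemC _).mpr ?_
      have hxh' : x * h⁻¹ * x⁻¹ = h := by
        calc x * h⁻¹ * x⁻¹ = (x * h * x⁻¹)⁻¹ := by group
          _ = (h⁻¹)⁻¹ := by rw [hxh]
          _ = h := inv_inv h
      have hkey : (x*x) * h * (x*x)⁻¹ = h := by
        calc (x*x) * h * (x*x)⁻¹ = x * (x*h*x⁻¹) * x⁻¹ := by group
          _ = x * h⁻¹ * x⁻¹ := by rw [hxh]
          _ = h := hxh'
      conv_lhs => rw [← hkey]
      group
    have hwconj : x * w * x⁻¹ ∈ C := hCnormal.conj_mem w hwC x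
    obtain ⟨j, hj⟩ := hgen ⟨x * w * x⁻¹, hwconj⟩
    have hjval : x * w * x⁻¹ = w ^ j := by
      have := congrArg Subtype.val hj
      simpa [hwdef] using this
    have hsq : (x*x) * w * (x*x)⁻¹ = w ^ (j*j) := by
      calc (x*x) * w * (x*x)⁻¹ = x * (x*w*x⁻¹) * x⁻¹ := by group
        _ = x * w^j * x⁻¹ := by rw [hjval]
        _ = (x * w * x⁻¹)^j := by rw [conj_zpow]
        _ = (w^j)^j := by rw [hjval]
        _ = w^(j*j) := by rw [← zpow_mul]
    have hcomm2 : (x*x) * w * (x*x)⁻¹ = w := by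
      have hcc := hcommC ⟨x*x, hx2⟩ xw
      have hvv : (x*x) * w = w * (x*x) := congrArg Subtype.val hcc
      conv_lhs => rw [hvv]
      group
    have hj2 : j * j = 1 := by
      apply hwinj
      show w ^ (j*j) = w ^ (1:ℤ)
      rw [← hsq, hcomm2, zpow_one]
    rcases Int.eq_one_or_neg_one_of_mul_eq_one' hj2 with ⟨h5, -⟩ | ⟨h5, -⟩
    · apply hx
      rw [h5, zpow_one] at hjval
      obtain ⟨nh, hnh⟩ := hgen ⟨h, hhC⟩
      have hnh' : h = w ^ nh := by
        have := congrArg Subtype.val hnh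
        simpa [hwdef] using this
      refine (hmemC x).mpr ?_
      have hcxw : Commute x w := by
        show x * w = w * x
        conv_rhs => rw [← hjval]
        group
      have hfin := (hcxw.zpow_right nh).eq
      rw [← hnh'] at hfin
      exact hfin.symm
    · rw [h5] at hjval
      rw [zpow_neg_one] at hjval
      obtain ⟨s, hs⟩ := hgen ⟨x*x, hx2⟩
      have hs' : x*x = w ^ s := by
        have := congrArg Subtype.val hs
        simpa [hwdef] using this
      have h10 : w ^ (-s) = w ^ s := by
        calc w ^ (-s) = (w⁻¹) ^ s := by rw [inv_zpow, zpow_neg]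
          _ = (x * w * x⁻¹) ^ s := by rw [hjval]
          _ = x * w^s * x⁻¹ := conj_zpow
          _ = x * (x*x) * x⁻¹ := by rw [← hs']
          _ = x*x := by group
          _ = w^s := hs'
      have hs0 : -s = s := hwinj h10
      have hs00 : s = 0 := by omega
      rw [hs00, zpow_zero] at hs'
      have hxtor : IsOfFinOrder x :=
        isOfFinOrder_iff_pow_eq_one.mpr ⟨2, by omega, by rw [pow_two]; exact hs'⟩
      apply hx
      rw [htf x hxtor]
      exact C.one_mem


end NP

theorem infinite_noncyclic_has_infinitely_many_nonpower {G : Type*} [Group G]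
    [Infinite G] (h : ¬IsCyclic G) :
    {H : Subgroup G | ∀ m : ℕ, H ≠ powerSubgroup G m}.Infinite := by
  by_contra hfin
  rw [Set.not_infinite] at hfin
  exact NP.main_contr hfin h
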